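/- There exists a Bézout domain which does not satisfy the MIP condition, i.e., a Bézout domain having a maximal ideal that is not principal. -/

import Mathlib

open HahnSeries

noncomputable abbrev myV : Valuation (HahnSeries ℚ ℚ) (Multiplicative (WithTop ℚ)ᵒᵈ) :=
  AddValuation.toValuation (HahnSeries.addVal ℚ ℚ)

lemma myV_le_one_iff (x : HahnSeries ℚ ℚ) : myV x ≤ 1 ↔ (0 : WithTop ℚ) ≤ x.orderTop := by
  rw [AddValuation.toValuation_apply, HahnSeries.addVal_apply]
  rw [show (1 : Multiplicative (WithTop ℚ)ᵒᵈ) = Multiplicative.ofAdd (OrderDual.toDual (0 : WithTop ℚ)) from rfl]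
  rw [Multiplicative.ofAdd_le]
  exact OrderDual.toDual_le_toDual

lemma myV_lt_one_iff (x : HahnSeries ℚ ℚ) : myV x < 1 ↔ (0 : WithTop ℚ) < x.orderTop := by
  rw [AddValuation.toValuation_apply, HahnSeries.addVal_apply]
  rw [show (1 : Multiplicative (WithTop ℚ)ᵒᵈ) = Multiplicative.ofAdd (OrderDual.toDual (0 : WithTop ℚ)) from rfl]
  rw [Multiplicative.ofAdd_lt]
  exact OrderDual.toDual_lt_toDual

noncomputable abbrev myA : ValuationSubring (HahnSeries ℚ ℚ) := myV.valuationSubring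

lemma mem_myA_iff (x : HahnSeries ℚ ℚ) : x ∈ myA ↔ (0 : WithTop ℚ) ≤ x.orderTop := by
  rw [Valuation.mem_valuationSubring_iff, myV_le_one_iff]

lemma mem_maxIdeal_iff (x : myA) :
    x ∈ IsLocalRing.maximalIdeal myA ↔ (0 : WithTop ℚ) < (x : HahnSeries ℚ ℚ).orderTop := by
  rw [ValuationSubring.valuation_lt_one_iff, ← myV_lt_one_iff]
  exact ((Valuation.isEquiv_valuation_valuationSubring myV).lt_one_iff_lt_one).symm

/-- There exists a Bézout domain (every two-generated ideal is principal)
which does not satisfy the MIP condition, i.e. it has a maximal ideal that is not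
principal. -/
theorem exists_bezout_not_mip : ∃ (R : Type) (_ : CommRing R) (_ : IsDomain R),
    (∀ a b : R, (Ideal.span {a, b} : Ideal R).IsPrincipal) ∧
    ∃ I : Ideal R, I.IsMaximal ∧ ¬I.IsPrincipal := by
  refine ⟨myA, inferInstance, inferInstance, fun a b => IsBezout.span_pair_isPrincipal a b,
    IsLocalRing.maximalIdeal myA, inferInstance, ?_⟩
  rintro ⟨π, hπ⟩
  -- the element single q 1 for q > 0 lies in the maximal ideal
  have hsingle : ∀ q : ℚ, 0 ≤ q → (HahnSeries.single q (1:ℚ)) ∈ myA := by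
    intro q hq
    rw [mem_myA_iff, HahnSeries.orderTop_single (by norm_num : (1:ℚ) ≠ 0)]
    exact_mod_cast hq
  have hmem : ∀ q : ℚ, 0 < q → ∀ h, (⟨HahnSeries.single q (1:ℚ), h⟩ : myA) ∈ IsLocalRing.maximalIdeal myA := by
    intro q hq h
    rw [mem_maxIdeal_iff]
    simp only [HahnSeries.orderTop_single (by norm_num : (1:ℚ) ≠ 0)]
    exact_mod_cast hq
  -- π is nonzero
  have hπmem : π ∈ IsLocalRing.maximalIdeal myA := by
    rw [hπ]; exact Ideal.mem_span_singleton_self π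
  have hπne : (π : HahnSeries ℚ ℚ) ≠ 0 := by
    intro h0
    have h1 := hmem 1 one_pos (hsingle 1 zero_le_one)
    rw [hπ, Submodule.mem_span_singleton] at h1
    obtain ⟨c, hc⟩ := h1
    rw [smul_eq_mul] at hc
    apply_fun (Subtype.val : myA → HahnSeries ℚ ℚ) at hc
    push_cast at hc
    rw [h0, mul_zero] at hc
    exact HahnSeries.single_ne_zero (by norm_num : (1:ℚ) ≠ 0) hc.symm
  set q : ℚ := (π : HahnSeries ℚ ℚ).order with hq
  have hq0 : 0 < q := by
    have := (mem_maxIdeal_iff π).mp hπmem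
    rw [← HahnSeries.order_eq_orderTop_of_ne_zero hπne] at this
    exact_mod_cast this
  -- consider single (q/2) 1
  have ha : HahnSeries.single (q/2) (1:ℚ) ∈ myA := hsingle _ (by linarith)
  have hamem := hmem (q/2) (by linarith) ha
  rw [hπ, Submodule.mem_span_singleton] at hamem
  obtain ⟨c, hc⟩ := hamem
  rw [smul_eq_mul] at hc
  apply_fun (Subtype.val : myA → HahnSeries ℚ ℚ) at hc
  push_cast at hc
  have hcne : (c : HahnSeries ℚ ℚ) ≠ 0 := by
    intro h0
    rw [h0, zero_mul] at hc
    exact HahnSeries.single_ne_zero (by norm_num : (1:ℚ) ≠ 0) hc.symm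
  have horder : (q/2 : ℚ) = (c : HahnSeries ℚ ℚ).order + q := by
    have := HahnSeries.order_mul hcne hπne
    rw [hc, HahnSeries.order_single (by norm_num : (1:ℚ) ≠ 0)] at this
    exact this
  have hcord : (0:ℚ) ≤ (c : HahnSeries ℚ ℚ).order := by
    have := (mem_myA_iff c).mp c.2
    rw [← HahnSeries.order_eq_orderTop_of_ne_zero hcne] at this
    exact_mod_cast this
  linarith
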